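/- Let f, R ∈ ℂ[X] with R ≠ 0, and suppose the equation f·y'' − f'·y' + R·y = 0 admits two linearly independent polynomial solutions y ∈ ℂ[X]. Then there exist linearly independent polynomial solutions P, Q of this equation with deg P > deg Q and deg P + deg Q = deg f + 1 such that every polynomial solution y of the equation is of the form y = λ·P + μ·Q for some λ, μ ∈ ℂ. -/

import Mathlib

open Polynomial

private lemma derivDeg {p : Polynomial ℂ} {n : ℕ} (h : p.natDegree = n + 1) :
    (derivative p).natDegree = n ∧ (derivative p).leadingCoeff = p.leadingCoeff * (n + 1) := by
  have hp : p ≠ 0 := by intro h0; simp [h0] at h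
  have hc : (derivative p).coeff n = p.leadingCoeff * (n + 1) := by
    rw [coeff_derivative, leadingCoeff, h]
  have hne : (derivative p).coeff n ≠ 0 := by
    rw [hc]
    exact mul_ne_zero (leadingCoeff_ne_zero.mpr hp) (Nat.cast_add_one_ne_zero n)
  have hle : (derivative p).natDegree ≤ n := by
    have := natDegree_derivative_le p
    omega
  have heq : (derivative p).natDegree = n :=
    le_antisymm hle (le_natDegree_of_ne_zero hne)
  exact ⟨heq, by rw [leadingCoeff, heq]; exact hc⟩

private lemma lemA {u v : Polynomial ℂ} (hu : u ≠ 0) (hv : v ≠ 0)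
    (h : u * derivative v = derivative u * v) : u.natDegree = v.natDegree := by
  by_cases hdu : derivative u = 0
  · by_cases hdv : derivative v = 0
    · rw [natDegree_eq_zero_of_derivative_eq_zero hdu,
        natDegree_eq_zero_of_derivative_eq_zero hdv]
    · exfalso
      rw [hdu, zero_mul] at h
      exact (mul_ne_zero hu hdv) h
  · by_cases hdv : derivative v = 0
    · exfalso
      rw [hdv, mul_zero] at h
      exact (mul_ne_zero hdu hv) h.symm
    · -- both derivatives nonzero
      have hun : u.natDegree ≠ 0 := fun h0 => hdu (by
        rw [eq_C_of_natDegree_eq_zero h0]; simp)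
      have hvn : v.natDegree ≠ 0 := fun h0 => hdv (by
        rw [eq_C_of_natDegree_eq_zero h0]; simp)
      obtain ⟨m, hm⟩ : ∃ m, u.natDegree = m + 1 := ⟨u.natDegree - 1, by omega⟩
      obtain ⟨n, hn⟩ : ∃ n, v.natDegree = n + 1 := ⟨v.natDegree - 1, by omega⟩
      obtain ⟨hdm, hlm⟩ := derivDeg hm
      obtain ⟨hdn, hln⟩ := derivDeg hn
      have hl : (u * derivative v).leadingCoeff = (derivative u * v).leadingCoeff := by
        rw [h]
      rw [leadingCoeff_mul, leadingCoeff_mul, hln, hlm] at hl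
      have hlu : u.leadingCoeff ≠ 0 := leadingCoeff_ne_zero.mpr hu
      have hlv : v.leadingCoeff ≠ 0 := leadingCoeff_ne_zero.mpr hv
      have h2 : (n : ℂ) = m := by
        have h3 : u.leadingCoeff * v.leadingCoeff * ((n : ℂ) - m) = 0 := by
          linear_combination hl
        rcases mul_eq_zero.mp h3 with h4 | h4
        · exact absurd h4 (mul_ne_zero hlu hlv)
        · linear_combination h4
      have : n = m := by exact_mod_cast h2
      omega

private lemma lemB {u v : Polynomial ℂ} (hu : u ≠ 0)
    (h : u * derivative v = derivative u * v) : ∃ c : ℂ, v = C c * u := by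
  by_cases hv : v = 0
  · exact ⟨0, by simp [hv]⟩
  have hnd := lemA hu hv h
  set c : ℂ := v.leadingCoeff / u.leadingCoeff with hc
  refine ⟨c, ?_⟩
  set w : Polynomial ℂ := v - C c * u with hw
  have hdw : derivative w = derivative v - C c * derivative u := by
    simp only [hw, derivative_sub, derivative_mul, derivative_C, zero_mul, zero_add]
  have hwrel : u * derivative w = derivative u * w := by
    rw [hdw, hw]; linear_combination h
  by_contra hne
  have hwne : w ≠ 0 := by
    intro h0
    apply hne
    have : v - C c * u = 0 := h0
    linear_combination this
  have hdeg := lemA hu hwne hwrel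
  have hlu : u.leadingCoeff ≠ 0 := leadingCoeff_ne_zero.mpr hu
  have hcw : w.coeff v.natDegree = 0 := by
    rw [hw]
    simp only [coeff_sub, coeff_C_mul]
    rw [hc]
    have : u.coeff v.natDegree = u.leadingCoeff := by rw [leadingCoeff, hnd]
    rw [this]
    have : v.coeff v.natDegree = v.leadingCoeff := rfl
    rw [this]
    field_simp
    ring
  have : w.leadingCoeff = 0 := by
    rw [leadingCoeff, ← hdeg, hnd] at *
    exact hcw
  exact hwne (leadingCoeff_eq_zero.mp this)

-- Wronskian relation: for two solutions, f * W' = f' * W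
private lemma wronk {f R y z : Polynomial ℂ}
    (hy : f * y.derivative.derivative - f.derivative * y.derivative + R * y = 0)
    (hz : f * z.derivative.derivative - f.derivative * z.derivative + R * z = 0) :
    f * derivative (y * derivative z - z * derivative y)
      = derivative f * (y * derivative z - z * derivative y) := by
  have e : derivative (y * derivative z - z * derivative y)
      = y * derivative (derivative z) - z * derivative (derivative y) := by
    simp only [derivative_sub, derivative_mul]; ring
  rw [e]
  linear_combination y * hz - z * hy

-- linear combinations of solutions are solutions
private lemma sol_comb3 {f R y₁ y₂ y₃ : Polynomial ℂ} (a b c : ℂ)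
    (h1 : f * y₁.derivative.derivative - f.derivative * y₁.derivative + R * y₁ = 0)
    (h2 : f * y₂.derivative.derivative - f.derivative * y₂.derivative + R * y₂ = 0)
    (h3 : f * y₃.derivative.derivative - f.derivative * y₃.derivative + R * y₃ = 0) :
    f * (C a * y₁ + C b * y₂ + C c * y₃).derivative.derivative
      - f.derivative * (C a * y₁ + C b * y₂ + C c * y₃).derivative
      + R * (C a * y₁ + C b * y₂ + C c * y₃) = 0 := by
  have e1 : (C a * y₁ + C b * y₂ + C c * y₃).derivative
      = C a * y₁.derivative + C b * y₂.derivative + C c * y₃.derivative := by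
    simp [derivative_add, derivative_mul]
  rw [e1]
  have e2 : (C a * y₁.derivative + C b * y₂.derivative + C c * y₃.derivative).derivative
      = C a * y₁.derivative.derivative + C b * y₂.derivative.derivative
        + C c * y₃.derivative.derivative := by
    simp [derivative_add, derivative_mul]
  rw [e2]
  linear_combination C a * h1 + C b * h2 + C c * h3


private lemma mainAux (f R : Polynomial ℂ) (_hR : R ≠ 0) (hf : f ≠ 0) (P Q : Polynomial ℂ)
    (hP : f * P.derivative.derivative - f.derivative * P.derivative + R * P = 0)
    (hQ : f * Q.derivative.derivative - f.derivative * Q.derivative + R * Q = 0)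
    (hind : ∀ a b : ℂ, C a * P + C b * Q = 0 → a = 0 ∧ b = 0)
    (hdeg : Q.natDegree < P.natDegree) :
    P.natDegree + Q.natDegree = f.natDegree + 1 ∧
    ∀ y : Polynomial ℂ,
      f * y.derivative.derivative - f.derivative * y.derivative + R * y = 0 →
      ∃ lam mu : ℂ, y = C lam * P + C mu * Q := by
  have hP0 : P ≠ 0 := by
    intro h0
    exact one_ne_zero ((hind 1 0 (by simp [h0])).1)
  have hQ0 : Q ≠ 0 := by
    intro h0
    exact one_ne_zero ((hind 0 1 (by simp [h0])).2)
  have hlP : P.leadingCoeff ≠ 0 := leadingCoeff_ne_zero.mpr hP0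
  have hlQ : Q.leadingCoeff ≠ 0 := leadingCoeff_ne_zero.mpr hQ0
  set W : Polynomial ℂ := P * derivative Q - Q * derivative P with hWdef
  have hWrel : f * derivative W = derivative f * W := wronk hP hQ
  obtain ⟨γ, hγ⟩ : ∃ c : ℂ, W = C c * f := lemB hf hWrel
  have hW0 : W ≠ 0 := by
    intro h0
    have h1 : P * derivative Q = derivative P * Q := by
      have : P * derivative Q - Q * derivative P = 0 := h0
      linear_combination this
    obtain ⟨c, hc⟩ := lemB hP0 h1
    have := (hind c (-1) (by rw [hc, map_neg, map_one]; ring)).2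
    norm_num at this
  have hγ0 : γ ≠ 0 := by
    intro h0
    apply hW0
    rw [hγ, h0]; simp
  -- degree computation
  obtain ⟨p', hp'⟩ : ∃ p', P.natDegree = p' + 1 := ⟨P.natDegree - 1, by omega⟩
  obtain ⟨hdP, hlPd⟩ := derivDeg hp'
  have hWdeg : W.natDegree = p' + Q.natDegree := by
    have hdPne : derivative P ≠ 0 := by
      intro h0
      rw [h0] at hlPd
      simp only [leadingCoeff_zero] at hlPd
      exact (mul_ne_zero hlP (Nat.cast_add_one_ne_zero p')) hlPd.symm
    by_cases hq : Q.natDegree = 0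
    · -- Q is a nonzero constant, derivative Q = 0
      have hQC : Q = C (Q.coeff 0) := eq_C_of_natDegree_eq_zero hq
      have hdQ : derivative Q = 0 := by rw [hQC]; simp
      have hW' : W = -(Q * derivative P) := by rw [hWdef, hdQ]; ring
      rw [hW', natDegree_neg, natDegree_mul hQ0 hdPne, hdP, hq]
      omega
    · obtain ⟨q', hq'⟩ : ∃ q', Q.natDegree = q' + 1 := ⟨Q.natDegree - 1, by omega⟩
      obtain ⟨hdQ, hlQd⟩ := derivDeg hq'
      have hd : p' + Q.natDegree = P.natDegree + q' := by omega
      have hcoeff : W.coeff (p' + Q.natDegree) ≠ 0 := by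
        have c1 : (P * derivative Q).coeff (P.natDegree + q')
            = P.leadingCoeff * (Q.leadingCoeff * (q' + 1)) := by
          have := coeff_mul_degree_add_degree P (derivative Q)
          rw [hdQ, hlQd] at this
          exact this
        have c2 : (Q * derivative P).coeff (Q.natDegree + p')
            = Q.leadingCoeff * (P.leadingCoeff * (p' + 1)) := by
          have := coeff_mul_degree_add_degree Q (derivative P)
          rw [hdP, hlPd] at this
          exact this
        have e1 : Q.natDegree + p' = p' + Q.natDegree := by omega
        rw [e1] at c2
        rw [hWdef]
        simp only [coeff_sub]
        rw [hd] at *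
        rw [c1, c2]
        have : P.leadingCoeff * (Q.leadingCoeff * ((q' : ℂ) + 1))
            - Q.leadingCoeff * (P.leadingCoeff * ((p' : ℂ) + 1))
            = P.leadingCoeff * Q.leadingCoeff * ((q' : ℂ) - p') := by ring
        rw [this]
        apply mul_ne_zero (mul_ne_zero hlP hlQ)
        intro h0
        have : (q' : ℂ) = p' := by linear_combination h0
        have : q' = p' := by exact_mod_cast this
        omega
      have hle : W.natDegree ≤ p' + Q.natDegree := by
        refine le_trans (natDegree_sub_le _ _) (max_le ?_ ?_)
        · refine le_trans (natDegree_mul_le) ?_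
          rw [hdQ]; omega
        · refine le_trans (natDegree_mul_le) ?_
          rw [hdP]; omega
      exact le_antisymm hle (le_natDegree_of_ne_zero hcoeff)
  have hfdeg : f.natDegree = p' + Q.natDegree := by
    rw [← hWdeg, hγ, natDegree_C_mul hγ0]
  constructor
  · omega
  -- spanning
  intro y hy
  obtain ⟨α, hα⟩ : ∃ c : ℂ, P * derivative y - y * derivative P = C c * f :=
    lemB hf (wronk hP hy)
  obtain ⟨β, hβ⟩ : ∃ c : ℂ, Q * derivative y - y * derivative Q = C c * f :=
    lemB hf (wronk hQ hy)
  set lam : ℂ := -β / γ with hlam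
  set mu : ℂ := α / γ with hmu
  set z : Polynomial ℂ := y - C lam * P - C mu * Q with hz
  have hdz : derivative z = derivative y - C lam * derivative P - C mu * derivative Q := by
    simp only [hz, derivative_sub, derivative_mul, derivative_C, zero_mul, zero_add]
  have hmg : (C mu : Polynomial ℂ) * C γ = C α := by
    rw [← C_mul]
    congr 1
    rw [hmu]; exact div_mul_cancel₀ α hγ0
  have hlg : (C lam : Polynomial ℂ) * C γ = -(C β) := by
    rw [← C_mul, ← map_neg]
    congr 1
    rw [hlam]; exact div_mul_cancel₀ (-β) hγ0
  have e1 : P * derivative z = derivative P * z := by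
    rw [hdz, hz]
    linear_combination hα - C mu * hγ - f * hmg
  have e2 : Q * derivative z = derivative Q * z := by
    rw [hdz, hz]
    linear_combination hβ + C lam * hγ + f * hlg
  obtain ⟨c, hc⟩ := lemB hP0 e1
  obtain ⟨d, hd⟩ := lemB hQ0 e2
  have hcd : C c * P + C (-d) * Q = 0 := by
    rw [← hc]
    rw [map_neg]
    linear_combination hd
  obtain ⟨hc0, hd0⟩ := hind c (-d) hcd
  have hz0 : z = 0 := by rw [hc, hc0]; simp
  refine ⟨lam, mu, ?_⟩
  have : y - C lam * P - C mu * Q = 0 := hz0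
  linear_combination this

theorem stmt9 (f R : Polynomial ℂ) (hR : R ≠ 0)
    (hsol : ∃ y₁ y₂ : Polynomial ℂ,
      (f * y₁.derivative.derivative - f.derivative * y₁.derivative + R * y₁ = 0) ∧
      (f * y₂.derivative.derivative - f.derivative * y₂.derivative + R * y₂ = 0) ∧
      (∀ a b : ℂ, Polynomial.C a * y₁ + Polynomial.C b * y₂ = 0 → a = 0 ∧ b = 0)) :
    ∃ P Q : Polynomial ℂ,
      (f * P.derivative.derivative - f.derivative * P.derivative + R * P = 0) ∧
      (f * Q.derivative.derivative - f.derivative * Q.derivative + R * Q = 0) ∧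
      (∀ a b : ℂ, Polynomial.C a * P + Polynomial.C b * Q = 0 → a = 0 ∧ b = 0) ∧
      Q.natDegree < P.natDegree ∧
      P.natDegree + Q.natDegree = f.natDegree + 1 ∧
      ∀ y : Polynomial ℂ,
        f * y.derivative.derivative - f.derivative * y.derivative + R * y = 0 →
        ∃ lam mu : ℂ, y = Polynomial.C lam * P + Polynomial.C mu * Q := by
  obtain ⟨y₁, y₂, h₁, h₂, hind⟩ := hsol
  have hy₁0 : y₁ ≠ 0 := fun h => one_ne_zero ((hind 1 0 (by simp [h])).1)
  have hy₂0 : y₂ ≠ 0 := fun h => one_ne_zero ((hind 0 1 (by simp [h])).2)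
  have hf : f ≠ 0 := by
    intro h0
    apply hy₁0
    have h₁' := h₁
    rw [h0] at h₁'
    simp only [zero_mul, derivative_zero, sub_zero, zero_sub, neg_zero, zero_add] at h₁'
    rcases mul_eq_zero.mp h₁' with h | h
    · exact absurd h hR
    · exact h
  have hzero : f * (0 : Polynomial ℂ).derivative.derivative
      - f.derivative * (0 : Polynomial ℂ).derivative + R * 0 = 0 := by simp
  rcases lt_trichotomy y₁.natDegree y₂.natDegree with hlt | heq | hgt
  · have hind' : ∀ a b : ℂ, C a * y₂ + C b * y₁ = 0 → a = 0 ∧ b = 0 := by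
      intro a b h
      have := hind b a (by linear_combination h)
      exact ⟨this.2, this.1⟩
    obtain ⟨hdeq, hspan⟩ := mainAux f R hR hf y₂ y₁ h₂ h₁ hind' hlt
    exact ⟨y₂, y₁, h₂, h₁, hind', hlt, hdeq, hspan⟩
  · -- equal degrees: replace y₂ by a lower-degree combination
    have hl₁ : y₁.leadingCoeff ≠ 0 := leadingCoeff_ne_zero.mpr hy₁0
    set z : Polynomial ℂ := C y₁.leadingCoeff * y₂ - C y₂.leadingCoeff * y₁ with hz
    have hzsol : f * z.derivative.derivative - f.derivative * z.derivative + R * z = 0 := by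
      have hcomb := sol_comb3 (-(y₂.leadingCoeff)) (y₁.leadingCoeff) 0 h₁ h₂ hzero
      have he : C (-(y₂.leadingCoeff)) * y₁ + C y₁.leadingCoeff * y₂ + C (0 : ℂ) * 0 = z := by
        rw [hz, map_neg, map_zero]; ring
      rwa [he] at hcomb
    have hzne : z ≠ 0 := by
      intro h0
      rw [hz] at h0
      have := (hind (-(y₂.leadingCoeff)) (y₁.leadingCoeff)
        (by rw [map_neg]; linear_combination h0)).2
      exact hl₁ this
    have hcz : z.coeff y₁.natDegree = 0 := by
      rw [hz]
      simp only [coeff_sub, coeff_C_mul]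
      have e2 : y₂.coeff y₁.natDegree = y₂.leadingCoeff := by
        rw [leadingCoeff, heq]
      have e1 : y₁.coeff y₁.natDegree = y₁.leadingCoeff := rfl
      rw [e1, e2]; ring
    have hzle : z.natDegree ≤ y₁.natDegree := by
      rw [hz]
      refine le_trans (natDegree_sub_le _ _) (max_le ?_ ?_)
      · exact le_trans (natDegree_C_mul_le _ _) (le_of_eq heq.symm)
      · exact natDegree_C_mul_le _ _
    have hzlt : z.natDegree < y₁.natDegree := by
      rcases lt_or_eq_of_le hzle with h | h
      · exact h
      · exfalso
        apply hzne
        apply leadingCoeff_eq_zero.mp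
        rw [leadingCoeff, h]
        exact hcz
    have hind2 : ∀ a b : ℂ, C a * y₁ + C b * z = 0 → a = 0 ∧ b = 0 := by
      intro a b h
      rw [hz] at h
      have := hind (a - b * y₂.leadingCoeff) (b * y₁.leadingCoeff)
        (by simp only [map_sub, map_mul]; linear_combination h)
      obtain ⟨ha, hb⟩ := this
      have hb0 : b = 0 := by
        rcases mul_eq_zero.mp hb with h' | h'
        · exact h'
        · exact absurd h' hl₁
      refine ⟨?_, hb0⟩
      rw [hb0] at ha
      simpa using ha
    obtain ⟨hdeq, hspan⟩ := mainAux f R hR hf y₁ z h₁ hzsol hind2 hzlt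
    exact ⟨y₁, z, h₁, hzsol, hind2, hzlt, hdeq, hspan⟩
  · obtain ⟨hdeq, hspan⟩ := mainAux f R hR hf y₁ y₂ h₁ h₂ hind hgt
    exact ⟨y₁, y₂, h₁, h₂, hind, hgt, hdeq, hspan⟩
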